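/- Let r, κ be positive integers. Consider parameters consisting of a row vector v ∈ ℝ^r, r × r Markov matrices M₃, M₆, M₉, and r × κ Markov matrices M₁, M₂, M₄, M₅, M₇, M₈, and define the associated 6-dimensional κ×κ×κ×κ×κ×κ joint distribution tensor by P(x₁,…,x₆) = ∑_{u,u',a,b ∈ [r]} v(u)·M₃(u,a)·M₁(a,x₁)·M₂(a,x₂)·M₇(u,x₅)·M₉(u,u')·M₆(u',b)·M₄(b,x₃)·M₅(b,x₄)·M₈(u',x₆). Suppose the parameters satisfy: (1) all entries of v and of v' = vM₉ are positive; (2) the four matrices M₆(M₄ ⊗row M₅), M₉M₆(M₄ ⊗row M₅), M₃(M₁ ⊗row M₂), and M₉'M₃(M₁ ⊗row M₂), where M₉' = diag(v')⁻¹ M₉ᵀ diag(v), all have rank r; (3) the Kruskal ranks of M₇ and M₈ are at least 2. Then if a second parameter tuple (w, N₁,…,N₉) also satisfies conditions (1)–(3) and yields the same joint distribution tensor, there exist r × r permutation matrices P₁ and P₂ such that N₉ = P₁ᵀ M₉ P₂, N₇ = P₁ᵀ M₇, and w = v P₁. -/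

import Mathlib

open Matrix

/-- The Kruskal rank of a real matrix: the largest `j` such that every set of `j`
rows is linearly independent. -/
noncomputable def kruskalRank {r κ : ℕ} (N : Matrix (Fin r) (Fin κ) ℝ) : ℕ :=
  sSup {j | j ≤ r ∧ ∀ s : Finset (Fin r), s.card = j →
    LinearIndependent ℝ (fun i : s => N (i : Fin r))}

/-- A Markov matrix: non-negative entries, each row summing to 1. -/
def IsMarkov {m κ : ℕ} (M : Matrix (Fin m) (Fin κ) ℝ) : Prop :=
  (∀ i j, 0 ≤ M i j) ∧ ∀ i, ∑ j, M i j = 1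

/-- The row-wise tensor product of two matrices. -/
def rowTensor {r s t : ℕ} (N₁ : Matrix (Fin r) (Fin s) ℝ) (N₂ : Matrix (Fin r) (Fin t) ℝ) :
    Matrix (Fin r) (Fin s × Fin t) ℝ :=
  Matrix.of fun i p => N₁ i p.1 * N₂ i p.2

/-- The permutation matrix of a permutation `σ`. -/
def permMatrix {n : ℕ} (σ : Equiv.Perm (Fin n)) : Matrix (Fin n) (Fin n) ℝ :=
  Matrix.of fun i j => if σ i = j then 1 else 0

/-- The joint distribution tensor of the Markov model on the 6-leaf tree of
Figure 1, with root distribution `v` at the internal node `ρ`. -/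
def jointDist {r κ : ℕ} (v : Fin r → ℝ)
    (M₁ M₂ : Matrix (Fin r) (Fin κ) ℝ) (M₃ : Matrix (Fin r) (Fin r) ℝ)
    (M₄ M₅ : Matrix (Fin r) (Fin κ) ℝ) (M₆ : Matrix (Fin r) (Fin r) ℝ)
    (M₇ M₈ : Matrix (Fin r) (Fin κ) ℝ) (M₉ : Matrix (Fin r) (Fin r) ℝ) :
    Fin κ → Fin κ → Fin κ → Fin κ → Fin κ → Fin κ → ℝ :=
  fun x₁ x₂ x₃ x₄ x₅ x₆ =>
    ∑ u : Fin r, ∑ u' : Fin r, ∑ a : Fin r, ∑ b : Fin r,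
      v u * M₃ u a * M₁ a x₁ * M₂ a x₂ * M₇ u x₅ * M₉ u u' *
        M₆ u' b * M₄ b x₃ * M₅ b x₄ * M₈ u' x₆

/-- The technical conditions (1)-(3) on the parameters of the 6-leaf tree model. -/
def GoodParams {r κ : ℕ} (v : Fin r → ℝ)
    (M₁ M₂ : Matrix (Fin r) (Fin κ) ℝ) (M₃ : Matrix (Fin r) (Fin r) ℝ)
    (M₄ M₅ : Matrix (Fin r) (Fin κ) ℝ) (M₆ : Matrix (Fin r) (Fin r) ℝ)
    (M₇ M₈ : Matrix (Fin r) (Fin κ) ℝ) (M₉ : Matrix (Fin r) (Fin r) ℝ) : Prop :=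
  (∀ u, 0 < v u) ∧ (∀ u, 0 < Matrix.vecMul v M₉ u) ∧
  (M₆ * rowTensor M₄ M₅).rank = r ∧
  (M₉ * M₆ * rowTensor M₄ M₅).rank = r ∧
  (M₃ * rowTensor M₁ M₂).rank = r ∧
  ((Matrix.diagonal (Matrix.vecMul v M₉))⁻¹ * M₉ᵀ * Matrix.diagonal v *
      (M₃ * rowTensor M₁ M₂)).rank = r ∧
  2 ≤ kruskalRank M₇ ∧ 2 ≤ kruskalRank M₈



lemma isUnit_of_rank_eq {n : ℕ} (M : Matrix (Fin n) (Fin n) ℝ) (h : M.rank = n) :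
    IsUnit M := by
  rw [← Matrix.mulVec_surjective_iff_isUnit]
  have : LinearMap.range M.mulVecLin = ⊤ := by
    apply Submodule.eq_top_of_finrank_eq
    rw [← Matrix.rank, h, Module.finrank_pi]
    simp
  exact fun y => LinearMap.range_eq_top.mp this y

lemma triple_apply {r : ℕ} {S T : Type*} [Fintype S] [Fintype T]
    (X : Matrix (Fin r) S ℝ) (Y : Matrix (Fin r) T ℝ)
    (d : Fin r → ℝ) (i : S) (j : T) :
    (Xᵀ * diagonal d * Y) i j = ∑ u, d u * X u i * Y u j := by
  rw [Matrix.mul_apply]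
  refine Finset.sum_congr rfl fun u _ => ?_
  rw [Matrix.mul_diagonal, Matrix.transpose_apply]; ring

lemma cp_unique {r : ℕ} {S T K : Type*} [Fintype S] [Fintype T] [Fintype K]
    (v w : Fin r → ℝ)
    (A A' : Matrix (Fin r) S ℝ) (B B' : Matrix (Fin r) T ℝ)
    (C C' : Matrix (Fin r) K ℝ)
    (hv : ∀ u, 0 < v u) (hw : ∀ u, 0 < w u)
    (hA : A.rank = r) (hB : B.rank = r)
    (hArow : ∀ u, ∑ i, A u i = 1) (hA'row : ∀ u, ∑ i, A' u i = 1)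
    (hBrow : ∀ u, ∑ j, B u j = 1) (hB'row : ∀ u, ∑ j, B' u j = 1)
    (hCrow : ∀ u, ∑ x, C u x = 1) (hC'row : ∀ u, ∑ x, C' u x = 1)
    (hC : ∀ u₁ u₂, C u₁ = C u₂ → u₁ = u₂)
    (hC' : ∀ u₁ u₂, C' u₁ = C' u₂ → u₁ = u₂)
    (heq : ∀ i j x, ∑ u, v u * A u i * B u j * C u x
      = ∑ u, w u * A' u i * B' u j * C' u x) :
    ∃ π : Equiv.Perm (Fin r), (∀ u, w (π u) = v u) ∧ (∀ u, A' (π u) = A u) ∧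
      (∀ u, B' (π u) = B u) ∧ (∀ u, C' (π u) = C u) := by
  classical
  have hDv : IsUnit (diagonal v).det := by
    rw [det_diagonal]
    exact isUnit_iff_ne_zero.mpr (Finset.prod_pos (fun u _ => hv u)).ne'
  have hDw : IsUnit (diagonal w).det := by
    rw [det_diagonal]
    exact isUnit_iff_ne_zero.mpr (Finset.prod_pos (fun u _ => hw u)).ne'
  have hAAt : IsUnit (A * Aᵀ).det :=
    (Matrix.isUnit_iff_isUnit_det _).mp
      (isUnit_of_rank_eq _ (by rw [Matrix.rank_self_mul_transpose, hA]))
  have hBBt : IsUnit (B * Bᵀ).det :=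
    (Matrix.isUnit_iff_isUnit_det _).mp
      (isUnit_of_rank_eq _ (by rw [Matrix.rank_self_mul_transpose, hB]))
  set L := (A * Aᵀ)⁻¹ * A with hLdef
  set R := Bᵀ * (B * Bᵀ)⁻¹ with hRdef
  have hL : L * Aᵀ = 1 := by
    rw [hLdef, Matrix.mul_assoc, Matrix.nonsing_inv_mul _ hAAt]
  have hR : B * R = 1 := by
    rw [hRdef, ← Matrix.mul_assoc, Matrix.mul_nonsing_inv _ hBBt]
  set E := L * A'ᵀ with hEdef
  set F := B' * R with hFdef
  have hT : ∀ x : K, Aᵀ * diagonal (fun u => v u * C u x) * B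
      = A'ᵀ * diagonal (fun u => w u * C' u x) * B' := by
    intro x; ext i j
    rw [triple_apply, triple_apply]
    calc ∑ u, (v u * C u x) * A u i * B u j
        = ∑ u, v u * A u i * B u j * C u x :=
          Finset.sum_congr rfl fun u _ => by ring
      _ = ∑ u, w u * A' u i * B' u j * C' u x := heq i j x
      _ = ∑ u, (w u * C' u x) * A' u i * B' u j :=
          Finset.sum_congr rfl fun u _ => by ring
  have hDsum : ∑ x : K, diagonal (fun u => v u * C u x) = diagonal v := by
    ext i j
    rw [Matrix.sum_apply]
    by_cases h : i = j
    · subst h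
      simp only [Matrix.diagonal_apply_eq, ← Finset.mul_sum, hCrow, mul_one]
    · simp [Matrix.diagonal_apply_ne _ h]
  have hD'sum : ∑ x : K, diagonal (fun u => w u * C' u x) = diagonal w := by
    ext i j
    rw [Matrix.sum_apply]
    by_cases h : i = j
    · subst h
      simp only [Matrix.diagonal_apply_eq, ← Finset.mul_sum, hC'row, mul_one]
    · simp [Matrix.diagonal_apply_ne _ h]
  have h1 : ∀ x : K, diagonal (fun u => v u * C u x)
      = E * (diagonal (fun u => w u * C' u x) * F) := by
    intro x
    calc diagonal (fun u => v u * C u x)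
        = (L * Aᵀ) * diagonal (fun u => v u * C u x) * (B * R) := by
          rw [hL, hR, Matrix.one_mul, Matrix.mul_one]
      _ = L * (Aᵀ * diagonal (fun u => v u * C u x) * B) * R := by
          simp only [Matrix.mul_assoc]
      _ = L * (A'ᵀ * diagonal (fun u => w u * C' u x) * B') * R := by rw [hT x]
      _ = E * (diagonal (fun u => w u * C' u x) * F) := by
          rw [hEdef, hFdef]; simp only [Matrix.mul_assoc]
  have h2 : diagonal v = E * (diagonal w * F) := by
    rw [← hDsum, ← hD'sum]
    calc ∑ x : K, diagonal (fun u => v u * C u x)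
        = ∑ x : K, E * (diagonal (fun u => w u * C' u x) * F) :=
          Finset.sum_congr rfl fun x _ => h1 x
      _ = E * ((∑ x : K, diagonal (fun u => w u * C' u x)) * F) := by
          rw [← Matrix.mul_sum, ← Matrix.sum_mul]
  have hdetE : IsUnit E.det := by
    have := congrArg Matrix.det h2
    rw [Matrix.det_mul, Matrix.det_mul] at this
    rw [isUnit_iff_ne_zero]
    intro h0
    rw [h0, zero_mul] at this
    exact hDv.ne_zero this
  have hdetF : IsUnit F.det := by
    have := congrArg Matrix.det h2
    rw [Matrix.det_mul, Matrix.det_mul] at this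
    rw [isUnit_iff_ne_zero]
    intro h0
    rw [h0, mul_zero, mul_zero] at this
    exact hDv.ne_zero this
  have hDwF : IsUnit ((diagonal w) * F).det := by
    rw [Matrix.det_mul]; exact hDw.mul hdetF
  have h4 : ∀ x : K, diagonal (fun u => C u x) * E = E * diagonal (fun u => C' u x) := by
    intro x
    have lhs : (diagonal (fun u => C u x) * E) * ((diagonal w) * F)
        = diagonal (fun u => v u * C u x) := by
      rw [Matrix.mul_assoc, ← h2, Matrix.diagonal_mul_diagonal]
      exact congrArg diagonal (funext fun u => mul_comm _ _)
    have rhs : (E * diagonal (fun u => C' u x)) * ((diagonal w) * F)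
        = diagonal (fun u => v u * C u x) := by
      rw [Matrix.mul_assoc, ← Matrix.mul_assoc (diagonal fun u => C' u x),
        Matrix.diagonal_mul_diagonal, h1 x]
      congr 2
      exact congrArg diagonal (funext fun u => mul_comm _ _)
    calc diagonal (fun u => C u x) * E
        = (diagonal (fun u => C u x) * E) * ((diagonal w) * F) * ((diagonal w) * F)⁻¹ :=
          (Matrix.mul_nonsing_inv_cancel_right _ _ hDwF).symm
      _ = (E * diagonal (fun u => C' u x)) * ((diagonal w) * F) * ((diagonal w) * F)⁻¹ := by
          rw [lhs, rhs]
      _ = E * diagonal (fun u => C' u x) := Matrix.mul_nonsing_inv_cancel_right _ _ hDwF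
  have h5 : ∀ u u'' x, C u x * E u u'' = E u u'' * C' u'' x := by
    intro u u'' x
    have := congrFun (congrFun (h4 x) u) u''
    rwa [Matrix.diagonal_mul, Matrix.mul_diagonal] at this
  have hrowsC : ∀ u u'', E u u'' ≠ 0 → C u = C' u'' := by
    intro u u'' hne
    funext x
    have := h5 u u'' x
    rw [mul_comm (C u x) (E u u'')] at this
    exact mul_left_cancel₀ hne this
  have hex : ∀ u, ∃ u'', E u u'' ≠ 0 := by
    intro u
    by_contra h0
    push_neg at h0
    exact hdetE.ne_zero (Matrix.det_eq_zero_of_row_eq_zero u h0)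
  have huniq : ∀ u a b, E u a ≠ 0 → E u b ≠ 0 → a = b := fun u a b ha hb =>
    hC' a b ((hrowsC u a ha).symm.trans (hrowsC u b hb))
  set π₀ : Fin r → Fin r := fun u => (hex u).choose with hπ₀def
  have hπ₀ : ∀ u, E u (π₀ u) ≠ 0 := fun u => (hex u).choose_spec
  have hinj : Function.Injective π₀ := by
    intro u₁ u₂ h
    apply hC
    rw [hrowsC u₁ (π₀ u₁) (hπ₀ u₁), h, ← hrowsC u₂ (π₀ u₂) (hπ₀ u₂)]
  have hE0 : ∀ u u'', u'' ≠ π₀ u → E u u'' = 0 := by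
    intro u u'' hne
    by_contra h0
    exact hne (huniq u u'' (π₀ u) h0 (hπ₀ u))
  have h7 : ∀ u, C' (π₀ u) = C u := fun u => (hrowsC u (π₀ u) (hπ₀ u)).symm
  -- the `A` factor
  have e1 : ∀ x : K, Aᵀ * diagonal (fun u => v u * C u x)
      = A'ᵀ * (diagonal (fun u => w u * C' u x) * F) := by
    intro x
    calc Aᵀ * diagonal (fun u => v u * C u x)
        = Aᵀ * diagonal (fun u => v u * C u x) * (B * R) := by
          rw [hR, Matrix.mul_one]
      _ = (Aᵀ * diagonal (fun u => v u * C u x) * B) * R := by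
          simp only [Matrix.mul_assoc]
      _ = (A'ᵀ * diagonal (fun u => w u * C' u x) * B') * R := by rw [hT x]
      _ = A'ᵀ * (diagonal (fun u => w u * C' u x) * F) := by
          rw [hFdef]; simp only [Matrix.mul_assoc]
  have e2 : Aᵀ * diagonal v = A'ᵀ * (diagonal w * F) := by
    rw [← hDsum, ← hD'sum, Matrix.mul_sum, Matrix.sum_mul, Matrix.mul_sum]
    calc ∑ x : K, Aᵀ * diagonal (fun u => v u * C u x)
        = ∑ x : K, A'ᵀ * (diagonal (fun u => w u * C' u x) * F) :=
          Finset.sum_congr rfl fun x _ => e1 x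
      _ = ∑ x : K, A'ᵀ * (diagonal (fun u => w u * C' u x) * F) := rfl
  have hDwF_eq : diagonal w * F = E⁻¹ * diagonal v := by
    rw [h2, Matrix.nonsing_inv_mul_cancel_left _ _ hdetE]
  have h8 : A'ᵀ = Aᵀ * E := by
    have step : Aᵀ * diagonal v = A'ᵀ * E⁻¹ * diagonal v := by
      rw [e2, hDwF_eq, Matrix.mul_assoc]
    have h9 : Aᵀ = A'ᵀ * E⁻¹ := by
      calc Aᵀ = Aᵀ * diagonal v * (diagonal v)⁻¹ :=
            (Matrix.mul_nonsing_inv_cancel_right _ _ hDv).symm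
        _ = A'ᵀ * E⁻¹ * diagonal v * (diagonal v)⁻¹ := by rw [step]
        _ = A'ᵀ * E⁻¹ := Matrix.mul_nonsing_inv_cancel_right _ _ hDv
    rw [h9, Matrix.nonsing_inv_mul_cancel_right _ _ hdetE]
  have hA'entry : ∀ u i, A' (π₀ u) i = A u i * E u (π₀ u) := by
    intro u i
    have h10 := congrFun (congrFun h8 i) (π₀ u)
    rw [Matrix.transpose_apply, Matrix.mul_apply] at h10
    rw [h10]
    rw [Finset.sum_eq_single u]
    · rw [Matrix.transpose_apply]
    · intro b _ hb
      rw [hE0 b (π₀ u) fun hc => hb (hinj hc.symm), mul_zero]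
    · intro hc; exact absurd (Finset.mem_univ u) hc
  have h9val : ∀ u, E u (π₀ u) = 1 := by
    intro u
    have hs : ∑ i, A' (π₀ u) i = (∑ i, A u i) * E u (π₀ u) := by
      rw [Finset.sum_mul]
      exact Finset.sum_congr rfl fun i _ => hA'entry u i
    rw [hA'row, hArow, one_mul] at hs
    exact hs.symm
  have hAeq : ∀ u, A' (π₀ u) = A u := fun u => funext fun i => by
    rw [hA'entry u i, h9val, mul_one]
  -- the `B` factor
  have f1 : ∀ x : K, diagonal (fun u => v u * C u x) * B
      = E * (diagonal (fun u => w u * C' u x) * B') := by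
    intro x
    calc diagonal (fun u => v u * C u x) * B
        = (L * Aᵀ) * (diagonal (fun u => v u * C u x) * B) := by
          rw [hL, Matrix.one_mul]
      _ = L * (Aᵀ * diagonal (fun u => v u * C u x) * B) := by
          simp only [Matrix.mul_assoc]
      _ = L * (A'ᵀ * diagonal (fun u => w u * C' u x) * B') := by rw [hT x]
      _ = E * (diagonal (fun u => w u * C' u x) * B') := by
          rw [hEdef]; simp only [Matrix.mul_assoc]
  have f2 : diagonal v * B = E * (diagonal w * B') := by
    rw [← hDsum, ← hD'sum, Matrix.sum_mul, Matrix.sum_mul, Matrix.mul_sum]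
    exact Finset.sum_congr rfl fun x _ => f1 x
  have ent : ∀ u j, v u * B u j = w (π₀ u) * B' (π₀ u) j := by
    intro u j
    have h10 := congrFun (congrFun f2 u) j
    rw [Matrix.diagonal_mul, Matrix.mul_apply] at h10
    rw [h10]
    rw [Finset.sum_eq_single (π₀ u)]
    · rw [Matrix.diagonal_mul, h9val, one_mul]
    · intro b _ hb
      rw [hE0 u b hb, zero_mul]
    · intro hc; exact absurd (Finset.mem_univ _) hc
  have hvw : ∀ u, v u = w (π₀ u) := by
    intro u
    have : ∑ j, v u * B u j = ∑ j, w (π₀ u) * B' (π₀ u) j :=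
      Finset.sum_congr rfl fun j _ => ent u j
    rwa [← Finset.mul_sum, ← Finset.mul_sum, hBrow, hB'row, mul_one, mul_one] at this
  have hBeq : ∀ u, B' (π₀ u) = B u := by
    intro u
    funext j
    have h10 := ent u j
    rw [← hvw u] at h10
    exact (mul_left_cancel₀ (hv u).ne' h10).symm
  exact ⟨Equiv.ofBijective π₀ (Finite.injective_iff_bijective.mp hinj),
    fun u => (hvw u).symm, hAeq, hBeq, h7⟩

lemma rows_ne_of_kruskal {r κ : ℕ} (N : Matrix (Fin r) (Fin κ) ℝ)
    (h : 2 ≤ kruskalRank N) : ∀ u₁ u₂, N u₁ = N u₂ → u₁ = u₂ := by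
  classical
  set S := {j | j ≤ r ∧ ∀ s : Finset (Fin r), s.card = j →
    LinearIndependent ℝ (fun i : s => N (i : Fin r))} with hS
  have hne : S.Nonempty := by
    refine ⟨0, Nat.zero_le r, fun s hs => ?_⟩
    have : s = ∅ := Finset.card_eq_zero.mp hs
    subst this
    haveI : IsEmpty ((∅ : Finset (Fin r)) : Finset (Fin r)) := by
      simp only [Finset.isEmpty_coe_sort]
    exact linearIndependent_empty_type
  have hbdd : BddAbove S := ⟨r, fun j hj => hj.1⟩
  have hmem : kruskalRank N ∈ S := Nat.sSup_mem hne hbdd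
  obtain ⟨hle, hind⟩ := hmem
  intro u₁ u₂ hrow
  by_contra hne12
  have hcard : ({u₁, u₂} : Finset (Fin r)).card = 2 := by
    rw [Finset.card_insert_of_notMem (by simp [hne12]), Finset.card_singleton]
  obtain ⟨tset, hsub, hcardt⟩ := Finset.exists_superset_card_eq
    (n := kruskalRank N) (by rw [hcard]; exact h) (by simpa using hle)
  have hli := hind tset hcardt
  have hinj := hli.injective
  have m₁ : u₁ ∈ tset := hsub (by simp)
  have m₂ : u₂ ∈ tset := hsub (by simp)
  have : (⟨u₁, m₁⟩ : tset) = ⟨u₂, m₂⟩ := hinj hrow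
  exact hne12 (by simpa using this)

lemma rowsum_mul {r n : ℕ} {T : Type*} [Fintype T]
    (X : Matrix (Fin r) (Fin n) ℝ) (Y : Matrix (Fin n) T ℝ)
    (hX : ∀ i, ∑ j, X i j = 1) (hY : ∀ i, ∑ j, Y i j = 1) (i : Fin r) :
    ∑ j, (X * Y) i j = 1 := by
  simp only [Matrix.mul_apply]
  rw [Finset.sum_comm]
  calc ∑ k, ∑ j, X i k * Y k j = ∑ k, X i k * ∑ j, Y k j := by
        simp [Finset.mul_sum]
    _ = 1 := by simp [hY, hX i]

lemma rowsum_rowTensor {r s t : ℕ} (Y : Matrix (Fin r) (Fin s) ℝ) (Z : Matrix (Fin r) (Fin t) ℝ)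
    (hY : ∀ i, ∑ j, Y i j = 1) (hZ : ∀ i, ∑ j, Z i j = 1) (i : Fin r) :
    ∑ p : Fin s × Fin t, rowTensor Y Z i p = 1 := by
  rw [Fintype.sum_prod_type]
  simp only [rowTensor, Matrix.of_apply]
  calc ∑ a, ∑ b, Y i a * Z i b = ∑ a, Y i a * ∑ b, Z i b := by simp [Finset.mul_sum]
    _ = 1 := by simp [hZ, hY i]

lemma Atil_entry {r : ℕ} {T : Type*} [Fintype T] (v : Fin r → ℝ) (M₉ : Matrix (Fin r) (Fin r) ℝ)
    (A : Matrix (Fin r) T ℝ) (hdet : IsUnit (Matrix.diagonal (Matrix.vecMul v M₉)).det)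
    (u' : Fin r) (i : T) :
    Matrix.vecMul v M₉ u'
      * (((Matrix.diagonal (Matrix.vecMul v M₉))⁻¹ * M₉ᵀ * Matrix.diagonal v * A) u' i)
      = ∑ u, v u * M₉ u u' * A u i := by
  have h1 : Matrix.diagonal (Matrix.vecMul v M₉)
      * ((Matrix.diagonal (Matrix.vecMul v M₉))⁻¹ * M₉ᵀ * Matrix.diagonal v * A)
      = M₉ᵀ * (Matrix.diagonal v * A) := by
    simp only [Matrix.mul_assoc]
    rw [Matrix.mul_nonsing_inv_cancel_left _ _ hdet]
  have h2 := congrFun (congrFun h1 u') i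
  rw [Matrix.diagonal_mul] at h2
  rw [h2, Matrix.mul_apply]
  refine Finset.sum_congr rfl fun u _ => ?_
  rw [Matrix.diagonal_mul, Matrix.transpose_apply]
  ring

lemma permMatrixT_mul {n κ : ℕ} (σ : Equiv.Perm (Fin n)) (M : Matrix (Fin n) (Fin κ) ℝ)
    (a : Fin n) (x : Fin κ) : ((permMatrix σ)ᵀ * M) a x = M (σ.symm a) x := by
  rw [Matrix.mul_apply]
  rw [Finset.sum_eq_single (σ.symm a)]
  · simp [permMatrix]
  · intro b _ hb
    have : σ b ≠ a := fun hc => hb (by rw [← hc]; simp)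
    simp [permMatrix, this]
  · intro hc; exact absurd (Finset.mem_univ _) hc

lemma vecMul_permMatrix {n : ℕ} (σ : Equiv.Perm (Fin n)) (v : Fin n → ℝ) (a : Fin n) :
    Matrix.vecMul v (permMatrix σ) a = v (σ.symm a) := by
  simp only [Matrix.vecMul, dotProduct]
  rw [Finset.sum_eq_single (σ.symm a)]
  · simp [permMatrix]
  · intro b _ hb
    have : σ b ≠ a := fun hc => hb (by rw [← hc]; simp)
    simp [permMatrix, this]
  · intro hc; exact absurd (Finset.mem_univ _) hc

lemma mul_permMatrix {n : ℕ} (σ : Equiv.Perm (Fin n)) (M : Matrix (Fin n) (Fin n) ℝ)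
    (a b : Fin n) : (M * permMatrix σ) a b = M a (σ.symm b) := by
  rw [Matrix.mul_apply]
  rw [Finset.sum_eq_single (σ.symm b)]
  · simp [permMatrix]
  · intro c _ hc
    have : σ c ≠ b := fun h => hc (by rw [← h]; simp)
    simp [permMatrix, this]
  · intro hc; exact absurd (Finset.mem_univ _) hc

lemma slice5 {r κ : ℕ} (v : Fin r → ℝ)
    (M₁ M₂ : Matrix (Fin r) (Fin κ) ℝ) (M₃ : Matrix (Fin r) (Fin r) ℝ)
    (M₄ M₅ : Matrix (Fin r) (Fin κ) ℝ) (M₆ : Matrix (Fin r) (Fin r) ℝ)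
    (M₇ M₈ : Matrix (Fin r) (Fin κ) ℝ) (M₉ : Matrix (Fin r) (Fin r) ℝ)
    (h₈ : ∀ u, ∑ x, M₈ u x = 1) (x₁ x₂ x₃ x₄ x₅ : Fin κ) :
    ∑ x₆, jointDist v M₁ M₂ M₃ M₄ M₅ M₆ M₇ M₈ M₉ x₁ x₂ x₃ x₄ x₅ x₆
      = ∑ u, v u * (M₃ * rowTensor M₁ M₂) u (x₁, x₂)
          * ((M₉ * M₆ * rowTensor M₄ M₅) u (x₃, x₄)) * M₇ u x₅ := by
  unfold jointDist
  rw [Finset.sum_comm]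
  refine Finset.sum_congr rfl fun u _ => ?_
  rw [Finset.sum_comm]
  simp only [Matrix.mul_apply, rowTensor, Matrix.of_apply]
  have key : ∀ y : Fin r, (∑ x : Fin κ, ∑ a : Fin r, ∑ b : Fin r,
      v u * M₃ u a * M₁ a x₁ * M₂ a x₂ * M₇ u x₅ * M₉ u y * M₆ y b * M₄ b x₃ * M₅ b x₄ * M₈ y x)
      = ∑ a : Fin r, ∑ b : Fin r,
      v u * M₃ u a * M₁ a x₁ * M₂ a x₂ * M₇ u x₅ * M₉ u y * M₆ y b * M₄ b x₃ * M₅ b x₄ := by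
    intro y
    rw [Finset.sum_comm]
    refine Finset.sum_congr rfl fun a _ => ?_
    rw [Finset.sum_comm]
    refine Finset.sum_congr rfl fun b _ => ?_
    rw [← Finset.mul_sum, h₈, mul_one]
  simp only [key]
  have swap1 : (∑ y : Fin r, ∑ a : Fin r, ∑ b : Fin r,
      v u * M₃ u a * M₁ a x₁ * M₂ a x₂ * M₇ u x₅ * M₉ u y * M₆ y b * M₄ b x₃ * M₅ b x₄)
      = ∑ y : Fin r, ∑ b : Fin r, ∑ a : Fin r,
      v u * M₃ u a * M₁ a x₁ * M₂ a x₂ * M₇ u x₅ * M₉ u y * M₆ y b * M₄ b x₃ * M₅ b x₄ :=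
    Finset.sum_congr rfl fun y _ => Finset.sum_comm
  rw [swap1, Finset.sum_comm]
  simp only [Finset.sum_mul, Finset.mul_sum]
  refine Finset.sum_congr rfl fun b _ => ?_
  refine Finset.sum_congr rfl fun y _ => ?_
  refine Finset.sum_congr rfl fun a _ => ?_
  ring

lemma slice6 {r κ : ℕ} (v : Fin r → ℝ)
    (M₁ M₂ : Matrix (Fin r) (Fin κ) ℝ) (M₃ : Matrix (Fin r) (Fin r) ℝ)
    (M₄ M₅ : Matrix (Fin r) (Fin κ) ℝ) (M₆ : Matrix (Fin r) (Fin r) ℝ)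
    (M₇ M₈ : Matrix (Fin r) (Fin κ) ℝ) (M₉ : Matrix (Fin r) (Fin r) ℝ)
    (h₇ : ∀ u, ∑ x, M₇ u x = 1) (x₁ x₂ x₃ x₄ x₆ : Fin κ) :
    ∑ x₅, jointDist v M₁ M₂ M₃ M₄ M₅ M₆ M₇ M₈ M₉ x₁ x₂ x₃ x₄ x₅ x₆
      = ∑ y : Fin r, (∑ u, v u * M₉ u y * (M₃ * rowTensor M₁ M₂) u (x₁, x₂))
          * ((M₆ * rowTensor M₄ M₅) y (x₃, x₄)) * M₈ y x₆ := by
  unfold jointDist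
  rw [Finset.sum_comm]
  simp only [Matrix.mul_apply, rowTensor, Matrix.of_apply]
  have key : ∀ u : Fin r, (∑ x : Fin κ, ∑ y : Fin r, ∑ a : Fin r, ∑ b : Fin r,
      v u * M₃ u a * M₁ a x₁ * M₂ a x₂ * M₇ u x * M₉ u y * M₆ y b * M₄ b x₃ * M₅ b x₄ * M₈ y x₆)
      = ∑ y : Fin r, ∑ a : Fin r, ∑ b : Fin r,
      v u * M₃ u a * M₁ a x₁ * M₂ a x₂ * M₉ u y * M₆ y b * M₄ b x₃ * M₅ b x₄ * M₈ y x₆ := by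
    intro u
    rw [Finset.sum_comm]
    refine Finset.sum_congr rfl fun y _ => ?_
    rw [Finset.sum_comm]
    refine Finset.sum_congr rfl fun a _ => ?_
    rw [Finset.sum_comm]
    refine Finset.sum_congr rfl fun b _ => ?_
    calc ∑ x : Fin κ, v u * M₃ u a * M₁ a x₁ * M₂ a x₂ * M₇ u x * M₉ u y * M₆ y b * M₄ b x₃ * M₅ b x₄ * M₈ y x₆
        = ∑ x : Fin κ, (v u * M₃ u a * M₁ a x₁ * M₂ a x₂ * M₉ u y * M₆ y b * M₄ b x₃ * M₅ b x₄ * M₈ y x₆) * M₇ u x :=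
          Finset.sum_congr rfl fun x _ => by ring
      _ = _ := by rw [← Finset.mul_sum, h₇, mul_one]
  simp only [key]
  rw [Finset.sum_comm]
  simp only [Finset.sum_mul, Finset.mul_sum]
  refine Finset.sum_congr rfl fun y _ => ?_
  have sw : (∑ u : Fin r, ∑ a : Fin r, ∑ b : Fin r,
      v u * M₃ u a * M₁ a x₁ * M₂ a x₂ * M₉ u y * M₆ y b * M₄ b x₃ * M₅ b x₄ * M₈ y x₆)
      = ∑ u : Fin r, ∑ b : Fin r, ∑ a : Fin r,
      v u * M₃ u a * M₁ a x₁ * M₂ a x₂ * M₉ u y * M₆ y b * M₄ b x₃ * M₅ b x₄ * M₈ y x₆ :=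
    Finset.sum_congr rfl fun u _ => Finset.sum_comm
  rw [sw, Finset.sum_comm]
  refine Finset.sum_congr rfl fun b _ => ?_
  refine Finset.sum_congr rfl fun u _ => ?_
  refine Finset.sum_congr rfl fun a _ => ?_
  ring

/-- Identifiability of the central-edge Markov matrix, the root distribution and
the pendant matrix `M₇` on the 6-leaf tree, up to permutations. -/
theorem central_edge_identifiable {r κ : ℕ} (hr : 0 < r) (hκ : 0 < κ)
    (v w : Fin r → ℝ)
    (M₁ M₂ : Matrix (Fin r) (Fin κ) ℝ) (M₃ : Matrix (Fin r) (Fin r) ℝ)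
    (M₄ M₅ : Matrix (Fin r) (Fin κ) ℝ) (M₆ : Matrix (Fin r) (Fin r) ℝ)
    (M₇ M₈ : Matrix (Fin r) (Fin κ) ℝ) (M₉ : Matrix (Fin r) (Fin r) ℝ)
    (N₁ N₂ : Matrix (Fin r) (Fin κ) ℝ) (N₃ : Matrix (Fin r) (Fin r) ℝ)
    (N₄ N₅ : Matrix (Fin r) (Fin κ) ℝ) (N₆ : Matrix (Fin r) (Fin r) ℝ)
    (N₇ N₈ : Matrix (Fin r) (Fin κ) ℝ) (N₉ : Matrix (Fin r) (Fin r) ℝ)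
    (hM : IsMarkov M₁ ∧ IsMarkov M₂ ∧ IsMarkov M₃ ∧ IsMarkov M₄ ∧ IsMarkov M₅ ∧
      IsMarkov M₆ ∧ IsMarkov M₇ ∧ IsMarkov M₈ ∧ IsMarkov M₉)
    (hN : IsMarkov N₁ ∧ IsMarkov N₂ ∧ IsMarkov N₃ ∧ IsMarkov N₄ ∧ IsMarkov N₅ ∧
      IsMarkov N₆ ∧ IsMarkov N₇ ∧ IsMarkov N₈ ∧ IsMarkov N₉)
    (hgoodM : GoodParams v M₁ M₂ M₃ M₄ M₅ M₆ M₇ M₈ M₉)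
    (hgoodN : GoodParams w N₁ N₂ N₃ N₄ N₅ N₆ N₇ N₈ N₉)
    (heq : jointDist v M₁ M₂ M₃ M₄ M₅ M₆ M₇ M₈ M₉ =
      jointDist w N₁ N₂ N₃ N₄ N₅ N₆ N₇ N₈ N₉) :
    ∃ (σ₁ σ₂ : Equiv.Perm (Fin r)),
      N₉ = (permMatrix σ₁)ᵀ * M₉ * permMatrix σ₂ ∧
      N₇ = (permMatrix σ₁)ᵀ * M₇ ∧
      w = Matrix.vecMul v (permMatrix σ₁) := by

  classical
  obtain ⟨hM₁, hM₂, hM₃, hM₄, hM₅, hM₆, hM₇, hM₈, hM₉⟩ := hM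
  obtain ⟨hN₁, hN₂, hN₃, hN₄, hN₅, hN₆, hN₇, hN₈, hN₉⟩ := hN
  obtain ⟨hvpos, hv'pos, hrkB6, hrkB9, hrkA, hrkAt, hkr7, hkr8⟩ := hgoodM
  obtain ⟨hwpos, hw'pos, hrkB6N, hrkB9N, hrkAN, hrkAtN, hkr7N, hkr8N⟩ := hgoodN
  -- abbreviations
  have hArow : ∀ u, ∑ p : Fin κ × Fin κ, (M₃ * rowTensor M₁ M₂) u p = 1 :=
    rowsum_mul _ _ hM₃.2 (rowsum_rowTensor _ _ hM₁.2 hM₂.2)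
  have hA'row : ∀ u, ∑ p : Fin κ × Fin κ, (N₃ * rowTensor N₁ N₂) u p = 1 :=
    rowsum_mul _ _ hN₃.2 (rowsum_rowTensor _ _ hN₁.2 hN₂.2)
  have hB6row : ∀ u, ∑ p : Fin κ × Fin κ, (M₆ * rowTensor M₄ M₅) u p = 1 :=
    rowsum_mul _ _ hM₆.2 (rowsum_rowTensor _ _ hM₄.2 hM₅.2)
  have hB6'row : ∀ u, ∑ p : Fin κ × Fin κ, (N₆ * rowTensor N₄ N₅) u p = 1 :=
    rowsum_mul _ _ hN₆.2 (rowsum_rowTensor _ _ hN₄.2 hN₅.2)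
  have hB9row : ∀ u, ∑ p : Fin κ × Fin κ, (M₉ * M₆ * rowTensor M₄ M₅) u p = 1 :=
    rowsum_mul _ _ (rowsum_mul _ _ hM₉.2 hM₆.2) (rowsum_rowTensor _ _ hM₄.2 hM₅.2)
  have hB9'row : ∀ u, ∑ p : Fin κ × Fin κ, (N₉ * N₆ * rowTensor N₄ N₅) u p = 1 :=
    rowsum_mul _ _ (rowsum_mul _ _ hN₉.2 hN₆.2) (rowsum_rowTensor _ _ hN₄.2 hN₅.2)
  -- first Kruskal-type application: identify `π₁`
  have S1 : ∀ (i j : Fin κ × Fin κ) (x : Fin κ),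
      ∑ u, v u * (M₃ * rowTensor M₁ M₂) u i * (M₉ * M₆ * rowTensor M₄ M₅) u j * M₇ u x
      = ∑ u, w u * (N₃ * rowTensor N₁ N₂) u i * (N₉ * N₆ * rowTensor N₄ N₅) u j * N₇ u x := by
    rintro ⟨i1, i2⟩ ⟨j1, j2⟩ x
    rw [← slice5 v M₁ M₂ M₃ M₄ M₅ M₆ M₇ M₈ M₉ hM₈.2 i1 i2 j1 j2 x,
      ← slice5 w N₁ N₂ N₃ N₄ N₅ N₆ N₇ N₈ N₉ hN₈.2 i1 i2 j1 j2 x]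
    exact Finset.sum_congr rfl fun x₆ _ => by rw [heq]
  obtain ⟨π₁, hw1, hA1, hB1, hC1⟩ :=
    cp_unique v w (M₃ * rowTensor M₁ M₂) (N₃ * rowTensor N₁ N₂)
      (M₉ * M₆ * rowTensor M₄ M₅) (N₉ * N₆ * rowTensor N₄ N₅) M₇ N₇
      hvpos hwpos hrkA hrkB9 hArow hA'row hB9row hB9'row hM₇.2 hN₇.2
      (rows_ne_of_kruskal M₇ hkr7) (rows_ne_of_kruskal N₇ hkr7N) S1
  -- second Kruskal-type application: identify `π₂`
  have hdetv' : IsUnit (Matrix.diagonal (Matrix.vecMul v M₉)).det := by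
    rw [det_diagonal]
    exact isUnit_iff_ne_zero.mpr (Finset.prod_pos (fun u _ => hv'pos u)).ne'
  have hdetw' : IsUnit (Matrix.diagonal (Matrix.vecMul w N₉)).det := by
    rw [det_diagonal]
    exact isUnit_iff_ne_zero.mpr (Finset.prod_pos (fun u _ => hw'pos u)).ne'
  have hkeyM : ∀ (u' : Fin r) (i : Fin κ × Fin κ), Matrix.vecMul v M₉ u'
      * (((Matrix.diagonal (Matrix.vecMul v M₉))⁻¹ * M₉ᵀ * Matrix.diagonal v
          * (M₃ * rowTensor M₁ M₂)) u' i)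
      = ∑ u, v u * M₉ u u' * (M₃ * rowTensor M₁ M₂) u i :=
    Atil_entry v M₉ (M₃ * rowTensor M₁ M₂) hdetv'
  have hkeyN : ∀ (u' : Fin r) (i : Fin κ × Fin κ), Matrix.vecMul w N₉ u'
      * (((Matrix.diagonal (Matrix.vecMul w N₉))⁻¹ * N₉ᵀ * Matrix.diagonal w
          * (N₃ * rowTensor N₁ N₂)) u' i)
      = ∑ u, w u * N₉ u u' * (N₃ * rowTensor N₁ N₂) u i :=
    Atil_entry w N₉ (N₃ * rowTensor N₁ N₂) hdetw'
  have hAtrow : ∀ u', ∑ i : Fin κ × Fin κ, ((Matrix.diagonal (Matrix.vecMul v M₉))⁻¹ * M₉ᵀ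
      * Matrix.diagonal v * (M₃ * rowTensor M₁ M₂)) u' i = 1 := by
    intro u'
    have hmul : Matrix.vecMul v M₉ u' * ∑ i : Fin κ × Fin κ,
        ((Matrix.diagonal (Matrix.vecMul v M₉))⁻¹ * M₉ᵀ
          * Matrix.diagonal v * (M₃ * rowTensor M₁ M₂)) u' i
        = Matrix.vecMul v M₉ u' * 1 := by
      rw [Finset.mul_sum, mul_one]
      calc ∑ i : Fin κ × Fin κ, Matrix.vecMul v M₉ u'
            * ((Matrix.diagonal (Matrix.vecMul v M₉))⁻¹ * M₉ᵀ
              * Matrix.diagonal v * (M₃ * rowTensor M₁ M₂)) u' i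
          = ∑ i : Fin κ × Fin κ, ∑ u, v u * M₉ u u' * (M₃ * rowTensor M₁ M₂) u i :=
            Finset.sum_congr rfl fun i _ => hkeyM u' i
        _ = ∑ u, ∑ i : Fin κ × Fin κ, v u * M₉ u u' * (M₃ * rowTensor M₁ M₂) u i :=
            Finset.sum_comm
        _ = ∑ u, v u * M₉ u u' := by
            refine Finset.sum_congr rfl fun u _ => ?_
            rw [← Finset.mul_sum, hArow, mul_one]
        _ = Matrix.vecMul v M₉ u' := by simp [Matrix.vecMul, dotProduct]
    exact mul_left_cancel₀ (hv'pos u').ne' hmul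
  have hAt'row : ∀ u', ∑ i : Fin κ × Fin κ, ((Matrix.diagonal (Matrix.vecMul w N₉))⁻¹ * N₉ᵀ
      * Matrix.diagonal w * (N₃ * rowTensor N₁ N₂)) u' i = 1 := by
    intro u'
    have hmul : Matrix.vecMul w N₉ u' * ∑ i : Fin κ × Fin κ,
        ((Matrix.diagonal (Matrix.vecMul w N₉))⁻¹ * N₉ᵀ
          * Matrix.diagonal w * (N₃ * rowTensor N₁ N₂)) u' i
        = Matrix.vecMul w N₉ u' * 1 := by
      rw [Finset.mul_sum, mul_one]
      calc ∑ i : Fin κ × Fin κ, Matrix.vecMul w N₉ u'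
            * ((Matrix.diagonal (Matrix.vecMul w N₉))⁻¹ * N₉ᵀ
              * Matrix.diagonal w * (N₃ * rowTensor N₁ N₂)) u' i
          = ∑ i : Fin κ × Fin κ, ∑ u, w u * N₉ u u' * (N₃ * rowTensor N₁ N₂) u i :=
            Finset.sum_congr rfl fun i _ => hkeyN u' i
        _ = ∑ u, ∑ i : Fin κ × Fin κ, w u * N₉ u u' * (N₃ * rowTensor N₁ N₂) u i :=
            Finset.sum_comm
        _ = ∑ u, w u * N₉ u u' := by
            refine Finset.sum_congr rfl fun u _ => ?_
            rw [← Finset.mul_sum, hA'row, mul_one]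
        _ = Matrix.vecMul w N₉ u' := by simp [Matrix.vecMul, dotProduct]
    exact mul_left_cancel₀ (hw'pos u').ne' hmul
  have S2 : ∀ (i j : Fin κ × Fin κ) (x : Fin κ),
      ∑ u', Matrix.vecMul v M₉ u'
          * ((Matrix.diagonal (Matrix.vecMul v M₉))⁻¹ * M₉ᵀ * Matrix.diagonal v
            * (M₃ * rowTensor M₁ M₂)) u' i
          * (M₆ * rowTensor M₄ M₅) u' j * M₈ u' x
      = ∑ u', Matrix.vecMul w N₉ u'
          * ((Matrix.diagonal (Matrix.vecMul w N₉))⁻¹ * N₉ᵀ * Matrix.diagonal w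
            * (N₃ * rowTensor N₁ N₂)) u' i
          * (N₆ * rowTensor N₄ N₅) u' j * N₈ u' x := by
    rintro ⟨i1, i2⟩ ⟨j1, j2⟩ x
    calc ∑ u', Matrix.vecMul v M₉ u'
          * ((Matrix.diagonal (Matrix.vecMul v M₉))⁻¹ * M₉ᵀ * Matrix.diagonal v
            * (M₃ * rowTensor M₁ M₂)) u' (i1, i2)
          * (M₆ * rowTensor M₄ M₅) u' (j1, j2) * M₈ u' x
        = ∑ y, (∑ u, v u * M₉ u y * (M₃ * rowTensor M₁ M₂) u (i1, i2))
            * (M₆ * rowTensor M₄ M₅) y (j1, j2) * M₈ y x :=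
          Finset.sum_congr rfl fun y _ => by rw [hkeyM]
      _ = ∑ x₅, jointDist v M₁ M₂ M₃ M₄ M₅ M₆ M₇ M₈ M₉ i1 i2 j1 j2 x₅ x :=
          (slice6 v M₁ M₂ M₃ M₄ M₅ M₆ M₇ M₈ M₉ hM₇.2 i1 i2 j1 j2 x).symm
      _ = ∑ x₅, jointDist w N₁ N₂ N₃ N₄ N₅ N₆ N₇ N₈ N₉ i1 i2 j1 j2 x₅ x :=
          Finset.sum_congr rfl fun x₅ _ => by rw [heq]
      _ = ∑ y, (∑ u, w u * N₉ u y * (N₃ * rowTensor N₁ N₂) u (i1, i2))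
            * (N₆ * rowTensor N₄ N₅) y (j1, j2) * N₈ y x :=
          slice6 w N₁ N₂ N₃ N₄ N₅ N₆ N₇ N₈ N₉ hN₇.2 i1 i2 j1 j2 x
      _ = _ := Finset.sum_congr rfl fun y _ => by rw [hkeyN]
  obtain ⟨π₂, hw2, hA2, hB2, hC2⟩ :=
    cp_unique (Matrix.vecMul v M₉) (Matrix.vecMul w N₉)
      ((Matrix.diagonal (Matrix.vecMul v M₉))⁻¹ * M₉ᵀ * Matrix.diagonal v
        * (M₃ * rowTensor M₁ M₂))
      ((Matrix.diagonal (Matrix.vecMul w N₉))⁻¹ * N₉ᵀ * Matrix.diagonal w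
        * (N₃ * rowTensor N₁ N₂))
      (M₆ * rowTensor M₄ M₅) (N₆ * rowTensor N₄ N₅) M₈ N₈
      hv'pos hw'pos hrkAt hrkB6 hAtrow hAt'row hB6row hB6'row hM₈.2 hN₈.2
      (rows_ne_of_kruskal M₈ hkr8) (rows_ne_of_kruskal N₈ hkr8N) S2
  -- pairwise marginal and extraction of N₉
  have Spair : ∀ (i j : Fin κ × Fin κ),
      ∑ u, v u * (M₃ * rowTensor M₁ M₂) u i * (M₉ * M₆ * rowTensor M₄ M₅) u j
      = ∑ u, w u * (N₃ * rowTensor N₁ N₂) u i * (N₉ * N₆ * rowTensor N₄ N₅) u j := by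
    intro i j
    have hsum : ∑ x : Fin κ, ∑ u, v u * (M₃ * rowTensor M₁ M₂) u i
          * (M₉ * M₆ * rowTensor M₄ M₅) u j * M₇ u x
        = ∑ x : Fin κ, ∑ u, w u * (N₃ * rowTensor N₁ N₂) u i
          * (N₉ * N₆ * rowTensor N₄ N₅) u j * N₇ u x :=
      Finset.sum_congr rfl fun x _ => S1 i j x
    calc ∑ u, v u * (M₃ * rowTensor M₁ M₂) u i * (M₉ * M₆ * rowTensor M₄ M₅) u j
        = ∑ u, ∑ x : Fin κ, v u * (M₃ * rowTensor M₁ M₂) u i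
            * (M₉ * M₆ * rowTensor M₄ M₅) u j * M₇ u x := by
          refine Finset.sum_congr rfl fun u _ => ?_
          rw [← Finset.mul_sum, hM₇.2, mul_one]
      _ = ∑ x : Fin κ, ∑ u, v u * (M₃ * rowTensor M₁ M₂) u i
            * (M₉ * M₆ * rowTensor M₄ M₅) u j * M₇ u x := Finset.sum_comm
      _ = ∑ x : Fin κ, ∑ u, w u * (N₃ * rowTensor N₁ N₂) u i
            * (N₉ * N₆ * rowTensor N₄ N₅) u j * N₇ u x := hsum
      _ = ∑ u, ∑ x : Fin κ, w u * (N₃ * rowTensor N₁ N₂) u i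
            * (N₉ * N₆ * rowTensor N₄ N₅) u j * N₇ u x := Finset.sum_comm
      _ = _ := by
          refine Finset.sum_congr rfl fun u _ => ?_
          rw [← Finset.mul_sum, hN₇.2, mul_one]
  have hG : (M₃ * rowTensor M₁ M₂)ᵀ * Matrix.diagonal v
        * (M₉ * (M₆ * rowTensor M₄ M₅))
      = (M₃ * rowTensor M₁ M₂)ᵀ * Matrix.diagonal v
        * (Matrix.of (fun a b => N₉ (π₁ a) (π₂ b)) * (M₆ * rowTensor M₄ M₅)) := by
    ext i j
    rw [triple_apply, triple_apply]
    calc ∑ u, v u * (M₃ * rowTensor M₁ M₂) u i * (M₉ * (M₆ * rowTensor M₄ M₅)) u j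
        = ∑ u, v u * (M₃ * rowTensor M₁ M₂) u i * (M₉ * M₆ * rowTensor M₄ M₅) u j := by
          refine Finset.sum_congr rfl fun u _ => ?_
          rw [Matrix.mul_assoc]
      _ = ∑ u, w u * (N₃ * rowTensor N₁ N₂) u i * (N₉ * N₆ * rowTensor N₄ N₅) u j :=
          Spair i j
      _ = ∑ u, w u * (N₃ * rowTensor N₁ N₂) u i * (N₉ * (N₆ * rowTensor N₄ N₅)) u j := by
          refine Finset.sum_congr rfl fun u _ => ?_
          rw [Matrix.mul_assoc]
      _ = ∑ u, ∑ u', w u * (N₃ * rowTensor N₁ N₂) u i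
            * (N₉ u u' * (N₆ * rowTensor N₄ N₅) u' j) := by
          refine Finset.sum_congr rfl fun u _ => ?_
          rw [Matrix.mul_apply (M := N₉) (N := N₆ * rowTensor N₄ N₅), Finset.mul_sum]
      _ = ∑ u, ∑ u', w (π₁ u) * (N₃ * rowTensor N₁ N₂) (π₁ u) i
            * (N₉ (π₁ u) u' * (N₆ * rowTensor N₄ N₅) u' j) :=
          (Equiv.sum_comp π₁ (fun u => ∑ u', w u * (N₃ * rowTensor N₁ N₂) u i
            * (N₉ u u' * (N₆ * rowTensor N₄ N₅) u' j))).symm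
      _ = ∑ u, ∑ u', w (π₁ u) * (N₃ * rowTensor N₁ N₂) (π₁ u) i
            * (N₉ (π₁ u) (π₂ u') * (N₆ * rowTensor N₄ N₅) (π₂ u') j) :=
          Finset.sum_congr rfl fun u _ =>
            (Equiv.sum_comp π₂ (fun u' => w (π₁ u) * (N₃ * rowTensor N₁ N₂) (π₁ u) i
              * (N₉ (π₁ u) u' * (N₆ * rowTensor N₄ N₅) u' j))).symm
      _ = ∑ u, ∑ u', v u * (M₃ * rowTensor M₁ M₂) u i
            * (Matrix.of (fun a b => N₉ (π₁ a) (π₂ b)) u u'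
              * (M₆ * rowTensor M₄ M₅) u' j) := by
          refine Finset.sum_congr rfl fun u _ => Finset.sum_congr rfl fun u' _ => ?_
          rw [hw1 u, hA1 u, hB2 u']
          rfl
      _ = ∑ u, v u * (M₃ * rowTensor M₁ M₂) u i
            * ((Matrix.of (fun a b => N₉ (π₁ a) (π₂ b)) * (M₆ * rowTensor M₄ M₅)) u j) := by
          refine Finset.sum_congr rfl fun u _ => ?_
          rw [Matrix.mul_apply (M := Matrix.of (fun a b => N₉ (π₁ a) (π₂ b)))
            (N := M₆ * rowTensor M₄ M₅), Finset.mul_sum]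
  -- invert the flattening to recover `N₉`
  have hdv : IsUnit (Matrix.diagonal v).det := by
    rw [det_diagonal]
    exact isUnit_iff_ne_zero.mpr (Finset.prod_pos (fun u _ => hvpos u)).ne'
  have hAAt : IsUnit ((M₃ * rowTensor M₁ M₂) * (M₃ * rowTensor M₁ M₂)ᵀ).det :=
    (Matrix.isUnit_iff_isUnit_det _).mp
      (isUnit_of_rank_eq _ (by rw [Matrix.rank_self_mul_transpose, hrkA]))
  have hBBt : IsUnit ((M₆ * rowTensor M₄ M₅) * (M₆ * rowTensor M₄ M₅)ᵀ).det :=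
    (Matrix.isUnit_iff_isUnit_det _).mp
      (isUnit_of_rank_eq _ (by rw [Matrix.rank_self_mul_transpose, hrkB6]))
  have hL : (((M₃ * rowTensor M₁ M₂) * (M₃ * rowTensor M₁ M₂)ᵀ)⁻¹ * (M₃ * rowTensor M₁ M₂))
      * (M₃ * rowTensor M₁ M₂)ᵀ = 1 := by
    rw [Matrix.mul_assoc, Matrix.nonsing_inv_mul _ hAAt]
  have hRB : (M₆ * rowTensor M₄ M₅)
      * ((M₆ * rowTensor M₄ M₅)ᵀ * ((M₆ * rowTensor M₄ M₅) * (M₆ * rowTensor M₄ M₅)ᵀ)⁻¹)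
      = 1 := by
    rw [← Matrix.mul_assoc, Matrix.mul_nonsing_inv _ hBBt]
  simp only [Matrix.mul_assoc] at hG
  have step2 : Matrix.diagonal v * (M₉ * (M₆ * rowTensor M₄ M₅))
      = Matrix.diagonal v
        * (Matrix.of (fun a b => N₉ (π₁ a) (π₂ b)) * (M₆ * rowTensor M₄ M₅)) := by
    calc Matrix.diagonal v * (M₉ * (M₆ * rowTensor M₄ M₅))
        = (((M₃ * rowTensor M₁ M₂) * (M₃ * rowTensor M₁ M₂)ᵀ)⁻¹ * (M₃ * rowTensor M₁ M₂))
            * ((M₃ * rowTensor M₁ M₂)ᵀ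
              * (Matrix.diagonal v * (M₉ * (M₆ * rowTensor M₄ M₅)))) := by
          rw [← Matrix.mul_assoc _ _ (Matrix.diagonal v * _), hL, Matrix.one_mul]
      _ = (((M₃ * rowTensor M₁ M₂) * (M₃ * rowTensor M₁ M₂)ᵀ)⁻¹ * (M₃ * rowTensor M₁ M₂))
            * ((M₃ * rowTensor M₁ M₂)ᵀ * (Matrix.diagonal v
              * (Matrix.of (fun a b => N₉ (π₁ a) (π₂ b)) * (M₆ * rowTensor M₄ M₅)))) := by
          rw [hG]
      _ = Matrix.diagonal v
            * (Matrix.of (fun a b => N₉ (π₁ a) (π₂ b)) * (M₆ * rowTensor M₄ M₅)) := by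
          rw [← Matrix.mul_assoc _ _ (Matrix.diagonal v * _), hL, Matrix.one_mul]
  have step3 : M₉ * (M₆ * rowTensor M₄ M₅)
      = Matrix.of (fun a b => N₉ (π₁ a) (π₂ b)) * (M₆ * rowTensor M₄ M₅) := by
    calc M₉ * (M₆ * rowTensor M₄ M₅)
        = (Matrix.diagonal v)⁻¹ * (Matrix.diagonal v * (M₉ * (M₆ * rowTensor M₄ M₅))) :=
          (Matrix.nonsing_inv_mul_cancel_left _ _ hdv).symm
      _ = (Matrix.diagonal v)⁻¹ * (Matrix.diagonal v
            * (Matrix.of (fun a b => N₉ (π₁ a) (π₂ b)) * (M₆ * rowTensor M₄ M₅))) := by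
          rw [step2]
      _ = _ := Matrix.nonsing_inv_mul_cancel_left _ _ hdv
  have step4 : M₉ = Matrix.of (fun a b => N₉ (π₁ a) (π₂ b)) := by
    calc M₉ = M₉ * ((M₆ * rowTensor M₄ M₅)
          * ((M₆ * rowTensor M₄ M₅)ᵀ
            * ((M₆ * rowTensor M₄ M₅) * (M₆ * rowTensor M₄ M₅)ᵀ)⁻¹)) := by
          rw [hRB, Matrix.mul_one]
      _ = (M₉ * (M₆ * rowTensor M₄ M₅)) * ((M₆ * rowTensor M₄ M₅)ᵀ
            * ((M₆ * rowTensor M₄ M₅) * (M₆ * rowTensor M₄ M₅)ᵀ)⁻¹) := by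
          rw [← Matrix.mul_assoc]
      _ = (Matrix.of (fun a b => N₉ (π₁ a) (π₂ b)) * (M₆ * rowTensor M₄ M₅))
            * ((M₆ * rowTensor M₄ M₅)ᵀ
              * ((M₆ * rowTensor M₄ M₅) * (M₆ * rowTensor M₄ M₅)ᵀ)⁻¹) := by
          rw [step3]
      _ = Matrix.of (fun a b => N₉ (π₁ a) (π₂ b)) * ((M₆ * rowTensor M₄ M₅)
            * ((M₆ * rowTensor M₄ M₅)ᵀ
              * ((M₆ * rowTensor M₄ M₅) * (M₆ * rowTensor M₄ M₅)ᵀ)⁻¹)) := by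
          rw [Matrix.mul_assoc]
      _ = _ := by rw [hRB, Matrix.mul_one]
  refine ⟨π₁, π₂, ?_, ?_, ?_⟩
  · ext a b
    rw [mul_permMatrix, permMatrixT_mul]
    have h := congrFun (congrFun step4 (π₁.symm a)) (π₂.symm b)
    rw [Matrix.of_apply, Equiv.apply_symm_apply, Equiv.apply_symm_apply] at h
    exact h.symm
  · ext a x
    rw [permMatrixT_mul]
    have h := congrFun (hC1 (π₁.symm a)) x
    rwa [Equiv.apply_symm_apply] at h
  · funext a
    rw [_root_.vecMul_permMatrix]
    have h := hw1 (π₁.symm a)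
    rwa [Equiv.apply_symm_apply] at h
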